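/- Let T1, T2 : A → B(H) be completely positive maps with Stinespring dilations (π1, V̂1, K1) and (π2, V̂2, K2), and let W : K2 → K1 be a bounded operator with ‖W‖ ≤ 1 and W π2(a) = π1(a) W for all a ∈ A. On the Hilbert direct sum K1 ⊕ K2 define the *-homomorphism π := π1 ⊕ π2 (acting diagonally) and the bounded operators V1 ψ := (V̂1 ψ, 0) and V2 ψ := (W V̂2 ψ, sqrt(1 − W*W) V̂2 ψ), where sqrt(1 − W*W) is the positive square root of the positive operator 1 − W*W on K2. Then (π, V1, K1 ⊕ K2), (π, V2, K1 ⊕ K2) is a common dilation of (T1, T2), and V1* V2 = V̂1* W V̂2. -/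

import Mathlib

noncomputable section

open ContinuousLinearMap

/-- A linear map between star algebras is *completely positive* if, for every `n`, its
entrywise application to `n × n` matrices maps positive elements (i.e. elements of the form
`star y * y`) to positive elements. -/
def IsCPMap {A B : Type*} [NonUnitalSemiring A] [StarRing A]
    [NonUnitalSemiring B] [StarRing B] (T : A → B) : Prop :=
  ∀ (n : ℕ) (x : Matrix (Fin n) (Fin n) A),
    (∃ y : Matrix (Fin n) (Fin n) A, x = star y * y) →
      ∃ z : Matrix (Fin n) (Fin n) B, x.map T = star z * z

/-- `(π, V, K)` is a Stinespring dilation of `T : A → B(H)`: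
`T a = V⋆ ∘ π a ∘ V` for all `a`. -/
def IsStinespring {A : Type*} [CStarAlgebra A]
    {H : Type*} [NormedAddCommGroup H] [InnerProductSpace ℂ H] [CompleteSpace H]
    {K : Type*} [NormedAddCommGroup K] [InnerProductSpace ℂ K] [CompleteSpace K]
    (T : A →ₗ[ℂ] (H →L[ℂ] H)) (π : A →⋆ₙₐ[ℂ] (K →L[ℂ] K)) (V : H →L[ℂ] K) : Prop :=
  ∀ a : A, T a = (ContinuousLinearMap.adjoint V).comp ((π a).comp V)

/-! ### Auxiliary lemmas -/

lemma cfc_mem_elemental' {E : Type*} [CStarAlgebra E] (f : ℂ → ℂ) (S : E) :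
    cfc f S ∈ StarAlgebra.elemental ℂ S := by
  refine cfc_cases (· ∈ StarAlgebra.elemental ℂ S) S f (zero_mem _) fun hf hS' ↦ ?_
  rw [@cfcHom_eq_of_isStarNormal _ _ S hS']
  exact Subtype.coe_prop _

lemma commute_of_mem_elemental' {E : Type*} [CStarAlgebra E] {S b u : E} (hS : IsSelfAdjoint S)
    (hb : Commute S b) (hu : u ∈ StarAlgebra.elemental ℂ S) : Commute u b := by
  induction hu using StarAlgebra.elemental.induction_on with
  | self => exact hb
  | star_self => rw [hS.star_eq]; exact hb
  | algebraMap r => exact Algebra.commute_algebraMap_left r b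
  | add u hu v hv h1 h2 => exact h1.add_left h2
  | mul u hu v hv h1 h2 => exact h1.mul_left h2
  | closure s hs h v hv =>
      have hcl : closure s ⊆ {x : E | x * b = b * x} :=
        closure_minimal (fun x hx => h x hx)
          (isClosed_eq (continuous_mul_right b) (continuous_mul_left b))
      exact hcl hv

set_option maxHeartbeats 1000000 in
set_option synthInstance.maxHeartbeats 400000 in
/-- A positive operator commutes with everything its square commutes with. -/
lemma commute_sqrt' {K : Type*} [NormedAddCommGroup K] [InnerProductSpace ℂ K] [CompleteSpace K]
    (r b : K →L[ℂ] K) (hr : r.IsPositive) (hb : Commute (r * r) b) : Commute r b := by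
  have h0 : (0 : K →L[ℂ] K) ≤ r := (nonneg_iff_isPositive r).2 hr
  have hsa : IsSelfAdjoint r := hr.isSelfAdjoint
  have hS : IsSelfAdjoint (r * r) := by
    rw [IsSelfAdjoint, star_mul, hsa.star_eq]
  have hSnn : (0 : K →L[ℂ] K) ≤ r * r := by
    simpa [hsa.star_eq] using star_mul_self_nonneg r
  have h1 : r = cfc (fun z : ℂ ↦ (((NNReal.sqrt (Real.toNNReal z.re) : ℝ) : ℂ))) (r * r) := by
    have e1 : r = CFC.sqrt (r * r) := (CFC.sqrt_mul_self (A := K →L[ℂ] K) r h0).symm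
    have e2 : CFC.sqrt (r * r) = cfc NNReal.sqrt (r * r) := CFC.sqrt_eq_cfc
    have e3 : cfc NNReal.sqrt (r * r) =
        cfc (fun x : ℝ ↦ (NNReal.sqrt (Real.toNNReal x) : ℝ)) (r * r) :=
      cfc_nnreal_eq_real _ _ hSnn
    have e4 : cfc (fun x : ℝ ↦ (NNReal.sqrt (Real.toNNReal x) : ℝ)) (r * r) =
        cfc (fun z : ℂ ↦ (((NNReal.sqrt (Real.toNNReal z.re) : ℝ) : ℂ))) (r * r) :=
      cfc_real_eq_complex _ hS
    exact e1.trans (e2.trans (e3.trans e4))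
  have hmem : r ∈ StarAlgebra.elemental ℂ (r * r) := by
    have := cfc_mem_elemental' (fun z : ℂ ↦ (((NNReal.sqrt (Real.toNNReal z.re) : ℝ) : ℂ))) (r * r)
    rwa [← h1] at this
  exact commute_of_mem_elemental' hS hb hmem

section DiagHom

variable {A : Type*} [CStarAlgebra A]
    {H : Type*} [NormedAddCommGroup H] [InnerProductSpace ℂ H] [CompleteSpace H]
    {K₁ : Type*} [NormedAddCommGroup K₁] [InnerProductSpace ℂ K₁] [CompleteSpace K₁]
    {K₂ : Type*} [NormedAddCommGroup K₂] [InnerProductSpace ℂ K₂] [CompleteSpace K₂]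

local notation "⟪" x ", " y "⟫" => @inner ℂ _ _ x y

omit [CompleteSpace K₁] [CompleteSpace K₂] in
set_option maxHeartbeats 1000000 in
lemma inner_symm_pair (p q : K₁ × K₂) :
    ⟪(WithLp.equiv 2 (K₁ × K₂)).symm p, (WithLp.equiv 2 (K₁ × K₂)).symm q⟫
      = ⟪p.1, q.1⟫ + ⟪p.2, q.2⟫ := rfl

set_option maxHeartbeats 1000000 in
set_option synthInstance.maxHeartbeats 400000 in
/-- The diagonal direct sum of two representations, as a star homomorphism. -/
def diagPi (π₁ : A →⋆ₙₐ[ℂ] (K₁ →L[ℂ] K₁)) (π₂ : A →⋆ₙₐ[ℂ] (K₂ →L[ℂ] K₂)) :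
    A →⋆ₙₐ[ℂ] (WithLp 2 (K₁ × K₂) →L[ℂ] WithLp 2 (K₁ × K₂)) where
  toFun a :=
    (((WithLp.prodContinuousLinearEquiv 2 ℂ K₁ K₂).symm : (K₁ × K₂) →L[ℂ] WithLp 2 (K₁ × K₂))).comp
      (((π₁ a).prodMap (π₂ a)).comp
        ((WithLp.prodContinuousLinearEquiv 2 ℂ K₁ K₂ : WithLp 2 (K₁ × K₂) ≃L[ℂ] (K₁ × K₂)) :
          WithLp 2 (K₁ × K₂) →L[ℂ] (K₁ × K₂)))
  map_smul' c a := by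
    refine ContinuousLinearMap.ext fun x => ?_
    show (WithLp.equiv 2 (K₁ × K₂)).symm (π₁ (c • a) _, π₂ (c • a) _) = _
    rw [map_smul, map_smul]
    rfl
  map_zero' := by
    refine ContinuousLinearMap.ext fun x => ?_
    show (WithLp.equiv 2 (K₁ × K₂)).symm (π₁ 0 _, π₂ 0 _) = _
    rw [map_zero, map_zero]
    rfl
  map_add' a b := by
    refine ContinuousLinearMap.ext fun x => ?_
    show (WithLp.equiv 2 (K₁ × K₂)).symm (π₁ (a + b) _, π₂ (a + b) _) = _
    rw [map_add, map_add]
    rfl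
  map_mul' a b := by
    refine ContinuousLinearMap.ext fun x => ?_
    show (WithLp.equiv 2 (K₁ × K₂)).symm (π₁ (a * b) _, π₂ (a * b) _) = _
    rw [map_mul, map_mul]
    rfl
  map_star' a := by
    refine Eq.trans ((eq_adjoint_iff _ _).2 fun x y => ?_) (star_eq_adjoint _).symm
    show ⟪(WithLp.equiv 2 (K₁ × K₂)).symm (π₁ (star a) ((WithLp.equiv 2 (K₁ × K₂)) x).1,
        π₂ (star a) ((WithLp.equiv 2 (K₁ × K₂)) x).2), y⟫ = _
    conv_rhs => rw [show (((WithLp.prodContinuousLinearEquiv 2 ℂ K₁ K₂).symm :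
        (K₁ × K₂) →L[ℂ] WithLp 2 (K₁ × K₂))).comp (((π₁ a).prodMap (π₂ a)).comp
        ((WithLp.prodContinuousLinearEquiv 2 ℂ K₁ K₂ : WithLp 2 (K₁ × K₂) ≃L[ℂ] (K₁ × K₂)) :
          WithLp 2 (K₁ × K₂) →L[ℂ] (K₁ × K₂))) y
        = (WithLp.equiv 2 (K₁ × K₂)).symm (π₁ a ((WithLp.equiv 2 (K₁ × K₂)) y).1,
            π₂ a ((WithLp.equiv 2 (K₁ × K₂)) y).2) from rfl]
    rw [show x = (WithLp.equiv 2 (K₁ × K₂)).symm ((WithLp.equiv 2 (K₁ × K₂)) x) from rfl,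
      show y = (WithLp.equiv 2 (K₁ × K₂)).symm ((WithLp.equiv 2 (K₁ × K₂)) y) from rfl]
    rw [inner_symm_pair, inner_symm_pair]
    rw [map_star, map_star, star_eq_adjoint, star_eq_adjoint,
      adjoint_inner_left, adjoint_inner_left]
    simp only [Equiv.apply_symm_apply]

set_option maxHeartbeats 400000 in
lemma diagPi_apply (π₁ : A →⋆ₙₐ[ℂ] (K₁ →L[ℂ] K₁)) (π₂ : A →⋆ₙₐ[ℂ] (K₂ →L[ℂ] K₂)) (a : A)
    (x : WithLp 2 (K₁ × K₂)) :
    diagPi π₁ π₂ a x = (WithLp.equiv 2 (K₁ × K₂)).symm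
      (π₁ a ((WithLp.equiv 2 (K₁ × K₂)) x).1, π₂ a ((WithLp.equiv 2 (K₁ × K₂)) x).2) := rfl

set_option maxHeartbeats 400000 in
/-- Embedding into the first summand. -/
def intoFst (V : H →L[ℂ] K₁) : H →L[ℂ] WithLp 2 (K₁ × K₂) :=
  (((WithLp.prodContinuousLinearEquiv 2 ℂ K₁ K₂).symm : (K₁ × K₂) →L[ℂ] WithLp 2 (K₁ × K₂))).comp
    (V.prod 0)

set_option maxHeartbeats 400000 in
/-- Joint embedding. -/
def intoPair (U : H →L[ℂ] K₁) (V : H →L[ℂ] K₂) : H →L[ℂ] WithLp 2 (K₁ × K₂) :=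
  (((WithLp.prodContinuousLinearEquiv 2 ℂ K₁ K₂).symm : (K₁ × K₂) →L[ℂ] WithLp 2 (K₁ × K₂))).comp
    (U.prod V)

set_option maxHeartbeats 400000 in
lemma intoFst_apply (V : H →L[ℂ] K₁) (ψ : H) :
    intoFst (K₂ := K₂) V ψ = (WithLp.equiv 2 (K₁ × K₂)).symm (V ψ, 0) := rfl

set_option maxHeartbeats 400000 in
lemma intoPair_apply (U : H →L[ℂ] K₁) (V : H →L[ℂ] K₂) (ψ : H) :
    intoPair U V ψ = (WithLp.equiv 2 (K₁ × K₂)).symm (U ψ, V ψ) := rfl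

end DiagHom

local notation "⟪" x ", " y "⟫" => @inner ℂ _ _ x y

set_option maxHeartbeats 2000000 in
set_option synthInstance.maxHeartbeats 1000000 in
theorem stmt5 {A : Type*} [CStarAlgebra A]
    {H : Type*} [NormedAddCommGroup H] [InnerProductSpace ℂ H] [CompleteSpace H]
    {K₁ : Type*} [NormedAddCommGroup K₁] [InnerProductSpace ℂ K₁] [CompleteSpace K₁]
    {K₂ : Type*} [NormedAddCommGroup K₂] [InnerProductSpace ℂ K₂] [CompleteSpace K₂]
    (T₁ T₂ : A →ₗ[ℂ] (H →L[ℂ] H)) (hT₁ : IsCPMap T₁) (hT₂ : IsCPMap T₂)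
    (π₁ : A →⋆ₙₐ[ℂ] (K₁ →L[ℂ] K₁)) (V₁' : H →L[ℂ] K₁) (hV₁' : IsStinespring T₁ π₁ V₁')
    (π₂ : A →⋆ₙₐ[ℂ] (K₂ →L[ℂ] K₂)) (V₂' : H →L[ℂ] K₂) (hV₂' : IsStinespring T₂ π₂ V₂')
    (W : K₂ →L[ℂ] K₁) (hW : ‖W‖ ≤ 1)
    (hWπ : ∀ a : A, W.comp (π₂ a) = (π₁ a).comp W)
    -- `R` is the positive square root of `1 - W⋆W`
    (R : K₂ →L[ℂ] K₂) (hRpos : R.IsPositive)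
    (hRsq : R.comp R = 1 - (adjoint W).comp W) :
    ∃ (π : A →⋆ₙₐ[ℂ] (WithLp 2 (K₁ × K₂) →L[ℂ] WithLp 2 (K₁ × K₂)))
      (V₁ V₂ : H →L[ℂ] WithLp 2 (K₁ × K₂)),
      -- `π = π₁ ⊕ π₂` acts diagonally
      (∀ (a : A) (x : WithLp 2 (K₁ × K₂)),
        π a x = (WithLp.equiv 2 (K₁ × K₂)).symm
          (π₁ a ((WithLp.equiv 2 (K₁ × K₂)) x).1, π₂ a ((WithLp.equiv 2 (K₁ × K₂)) x).2)) ∧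
      -- `V₁ ψ = (V̂₁ ψ, 0)`
      (∀ ψ : H, V₁ ψ = (WithLp.equiv 2 (K₁ × K₂)).symm (V₁' ψ, 0)) ∧
      -- `V₂ ψ = (W V̂₂ ψ, √(1 - W⋆W) V̂₂ ψ)`
      (∀ ψ : H, V₂ ψ = (WithLp.equiv 2 (K₁ × K₂)).symm (W (V₂' ψ), R (V₂' ψ))) ∧
      IsStinespring T₁ π V₁ ∧ IsStinespring T₂ π V₂ ∧
      (adjoint V₁).comp V₂ = (adjoint V₁').comp (W.comp V₂') := by
  refine ⟨diagPi π₁ π₂, intoFst V₁', intoPair (W.comp V₂') (R.comp V₂'),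
    diagPi_apply π₁ π₂, intoFst_apply V₁', intoPair_apply (W.comp V₂') (R.comp V₂'), ?_, ?_, ?_⟩
  · -- Stinespring for T₁
    intro a
    rw [hV₁' a]
    refine ContinuousLinearMap.ext fun x => ?_
    refine ext_inner_right ℂ fun y => ?_
    simp only [ContinuousLinearMap.comp_apply, adjoint_inner_left]
    rw [intoFst_apply, intoFst_apply, diagPi_apply, inner_symm_pair]
    simp only [Equiv.apply_symm_apply]
    simp
  · -- Stinespring for T₂
    intro a
    have hWW : (π₂ a).comp (adjoint W) = (adjoint W).comp (π₁ a) := by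
      have h := congrArg adjoint (hWπ (star a))
      rw [adjoint_comp, adjoint_comp] at h
      rw [← star_eq_adjoint (π₂ (star a)), ← star_eq_adjoint (π₁ (star a)),
        ← map_star, ← map_star, star_star] at h
      exact h
    have h1' : ((adjoint W).comp W).comp (π₂ a) = (π₂ a).comp ((adjoint W).comp W) := by
      rw [ContinuousLinearMap.comp_assoc, hWπ a, ← ContinuousLinearMap.comp_assoc, ← hWW,
        ContinuousLinearMap.comp_assoc]
    have h1 : Commute ((adjoint W).comp W) (π₂ a) := h1'
    have hR2 : Commute (R * R) (π₂ a) := by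
      have hRR : R * R = 1 - (adjoint W).comp W := hRsq
      rw [hRR]
      exact (Commute.one_left (π₂ a)).sub_left h1
    have hRc : Commute R (π₂ a) := commute_sqrt' R (π₂ a) hRpos hR2
    have hRadj : adjoint R = R := hRpos.isSelfAdjoint.adjoint_eq
    have key : ((adjoint W).comp W) * π₂ a + R * (π₂ a * R) = π₂ a := by
      have e5 : R * (π₂ a * R) = π₂ a * (R * R) := by
        rw [← mul_assoc, hRc.eq, mul_assoc]
      have hRR : R * R = 1 - (adjoint W).comp W := hRsq
      rw [e5, hRR, h1.eq, ← mul_add]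
      simp
    rw [hV₂' a]
    refine ContinuousLinearMap.ext fun x => ?_
    refine ext_inner_right ℂ fun y => ?_
    simp only [ContinuousLinearMap.comp_apply, adjoint_inner_left]
    rw [intoPair_apply, intoPair_apply, diagPi_apply, inner_symm_pair]
    simp only [Equiv.apply_symm_apply, ContinuousLinearMap.comp_apply]
    have hWapp : π₁ a (W (V₂' x)) = W (π₂ a (V₂' x)) :=
      (ContinuousLinearMap.ext_iff.1 (hWπ a) (V₂' x)).symm
    rw [hWapp, ← adjoint_inner_left W, ← adjoint_inner_left R, hRadj, ← inner_add_left]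
    congr 1
    have := ContinuousLinearMap.ext_iff.1 key (V₂' x)
    simpa [ContinuousLinearMap.mul_apply, ContinuousLinearMap.add_apply] using this.symm
  · -- V₁⋆ V₂ = V₁'⋆ W V₂'
    refine ContinuousLinearMap.ext fun x => ?_
    refine ext_inner_right ℂ fun y => ?_
    simp only [ContinuousLinearMap.comp_apply, adjoint_inner_left]
    rw [intoPair_apply, intoFst_apply, inner_symm_pair]
    simp
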